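/- Let g and N be positive integers, and let α be a 2g×2g matrix over ℤ/Nℤ belonging to the symplectic group Sp_{2g}(ℤ/Nℤ), i.e., satisfying αᵀ J α = J where J = [[O_g, −I_g],[I_g, O_g]]. Suppose that for each j ∈ {1,…,g} there exists ε_j ∈ {1, −1} ⊆ ℤ/Nℤ with αᵀ e_j = ε_j e_j, and that there exists ε ∈ {1, −1} ⊆ ℤ/Nℤ with αᵀ f = ε f, where f = e_1 + ⋯ + e_g. Then there exists a symmetric g×g matrix C over ℤ/Nℤ such that α = [[I_g, O_g],[C, I_g]] or α = −[[I_g, O_g],[C, I_g]] (in g×g block form). -/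

import Mathlib

open Matrix

theorem statement12 (g N : ℕ) (hg : 0 < g) (hN : 0 < N)
    (α : Matrix (Fin g ⊕ Fin g) (Fin g ⊕ Fin g) (ZMod N))
    (hsp : αᵀ * Matrix.fromBlocks 0 (-1) 1 0 * α = Matrix.fromBlocks 0 (-1) 1 0)
    (hj : ∀ j : Fin g, ∃ ε : ZMod N, (ε = 1 ∨ ε = -1) ∧
      αᵀ.mulVec (Pi.single (Sum.inl j) 1 : Fin g ⊕ Fin g → ZMod N) =
        ε • (Pi.single (Sum.inl j) 1 : Fin g ⊕ Fin g → ZMod N))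
    (hf : ∃ ε : ZMod N, (ε = 1 ∨ ε = -1) ∧
      αᵀ.mulVec (Sum.elim (fun _ => (1 : ZMod N)) fun _ => 0) =
        ε • Sum.elim (fun _ => (1 : ZMod N)) fun _ => 0) :
    ∃ C : Matrix (Fin g) (Fin g) (ZMod N), C.IsSymm ∧
      (α = Matrix.fromBlocks 1 0 C 1 ∨ α = -Matrix.fromBlocks 1 0 C 1) := by
  classical
  obtain ⟨ε, hε, hfeq⟩ := hf
  choose εf hεf heqf using hj
  -- rows of α indexed by inl
  have hrow : ∀ j i, α (Sum.inl j) i = εf j * (Pi.single (Sum.inl j) 1 : Fin g ⊕ Fin g → ZMod N) i := by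
    intro j i
    have := congrFun (heqf j) i
    rw [Matrix.mulVec_single] at this
    simpa [Matrix.transpose_apply, mul_comm] using this
  -- εf j = ε
  have hεeq : ∀ j, εf j = ε := by
    intro j
    have := congrFun hfeq (Sum.inl j)
    simp only [Matrix.mulVec, dotProduct, Fintype.sum_sum_type, Sum.elim_inl, Sum.elim_inr,
      mul_one, mul_zero, Finset.sum_const_zero, add_zero, Pi.smul_apply, smul_eq_mul] at this
    have hsum : ∑ i, αᵀ (Sum.inl j) (Sum.inl i) = εf j := by
      have : ∀ i, αᵀ (Sum.inl j) (Sum.inl i) = εf i * (Pi.single (Sum.inl i) 1 : Fin g ⊕ Fin g → ZMod N) (Sum.inl j) := by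
        intro i; exact hrow i (Sum.inl j)
      rw [Finset.sum_congr rfl fun i _ => this i]
      simp [Pi.single_apply, Sum.inl.injEq]
    rw [hsum] at this
    simpa using this
  have hε2 : ε * ε = 1 := by rcases hε with h | h <;> subst h <;> ring
  set C : Matrix (Fin g) (Fin g) (ZMod N) := fun i j => α (Sum.inr i) (Sum.inl j) with hC
  set D : Matrix (Fin g) (Fin g) (ZMod N) := fun i j => α (Sum.inr i) (Sum.inr j) with hD
  have hblock : α = Matrix.fromBlocks (ε • 1) 0 C D := by
    ext i k
    rcases i with i | i <;> rcases k with k | k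
    · have := hrow i (Sum.inl k)
      rw [hεeq] at this
      simp only [Matrix.fromBlocks_apply₁₁, Matrix.smul_apply, Matrix.one_apply, smul_eq_mul]
      rw [this]
      simp [Pi.single_apply, eq_comm, Sum.inl.injEq]
    · have := hrow i (Sum.inr k)
      rw [hεeq] at this
      simpa using this
    · exact (Matrix.fromBlocks_apply₂₁ (ε • 1) 0 C D i k).symm
    · exact (Matrix.fromBlocks_apply₂₂ (ε • 1) 0 C D i k).symm
  rw [hblock, Matrix.fromBlocks_transpose, Matrix.fromBlocks_multiply,
    Matrix.fromBlocks_multiply] at hsp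
  simp only [Matrix.transpose_smul, Matrix.transpose_one, Matrix.transpose_zero,
    Matrix.mul_zero, Matrix.zero_mul, Matrix.mul_one, Matrix.one_mul, Matrix.mul_neg,
    Matrix.neg_mul, add_zero, zero_add, Matrix.smul_mul, Matrix.mul_smul,
    Matrix.fromBlocks_inj] at hsp
  obtain ⟨h11, h12, h21, h22⟩ := hsp
  -- h12 : something = -1 involving D ; extract D = ε • 1 and Cᵀ = C
  have hDval : D = ε • 1 := by
    have h : ε • D = (1 : Matrix (Fin g) (Fin g) (ZMod N)) := by
      have := neg_injective h12
      simpa using this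
    calc D = (ε * ε) • D := by rw [hε2, one_smul]
    _ = ε • (ε • D) := by rw [smul_smul]
    _ = ε • 1 := by rw [h]
  have hCsymm : Cᵀ = C := by
    have h : ε • Cᵀ = ε • C := by
      have := add_neg_eq_zero.mp h11
      exact this
    calc Cᵀ = (ε * ε) • Cᵀ := by rw [hε2, one_smul]
    _ = ε • (ε • Cᵀ) := by rw [smul_smul]
    _ = ε • (ε • C) := by rw [h]
    _ = (ε * ε) • C := by rw [smul_smul]
    _ = C := by rw [hε2, one_smul]
  refine ⟨ε • C, ?_, ?_⟩
  · rw [Matrix.IsSymm, Matrix.transpose_smul, hCsymm]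
  · rcases hε with h | h <;> subst h
    · left; rw [hblock, hDval]; simp
    · right; rw [hblock, hDval]
      rw [Matrix.fromBlocks_neg]
      exact Matrix.fromBlocks_inj.mpr ⟨by simp, by simp, by simp, by simp⟩
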